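/- Let Y_τ ∈ ℝ^{8×8} be a rank-1 symmetric PSD matrix written as zzᵀ for some z ∈ ℝ⁸, partitioned as z = (a·y₁; b·y₂; c; d) with ‖y₁‖ = ‖y₂‖ = 1 and a, b ≥ 0. Suppose: (1) trace(Y_τ) = 2; (2) trace(Y_τ(1:3,1:3)) = Y_τ(7,7) and trace(Y_τ(4:6,4:6)) = Y_τ(8,8); (3) Y_τ(4:6,7) = Y_τ(1:3,8); (4) trace(Y_τ(1:3,4:6)) = Y_τ(7,8); (5) Y_τ(7,7) ∈ [0,1]; (6) Y_τ(7,8) ≥ 0. Then there exist t ∈ [0,1], a unit vector y ∈ ℝ³, and a sign s ∈ {+1,−1} such that z = (√t·y; √(1−t)·y; s√t; s√(1−t)). -/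
import Mathlib


open Matrix

set_option maxHeartbeats 1600000 in
/-- Structure of rank-1 matrices `Y_τ = z zᵀ`, `z = (a y₁; b y₂; c; d)` with
`a, b ≥ 0` and `y₁, y₂` unit vectors, satisfying the linear constraints
(1)–(6): then `z = (√t y; √(1−t) y; s√t; s√(1−t))` for some `t ∈ [0,1]`, a unit
vector `y` and a sign `s ∈ {1, −1}`. -/
theorem rank_one_prismatic_structure (a b c d : ℝ) (y₁ y₂ : Fin 3 → ℝ)
    (ha : 0 ≤ a) (hb : 0 ≤ b)
    (hy₁ : ∑ i, y₁ i ^ 2 = 1) (hy₂ : ∑ i, y₂ i ^ 2 = 1)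
    (z : Fin 8 → ℝ)
    (hz : z = ![a * y₁ 0, a * y₁ 1, a * y₁ 2, b * y₂ 0, b * y₂ 1, b * y₂ 2, c, d])
    (Y : Matrix (Fin 8) (Fin 8) ℝ) (hYz : Y = vecMulVec z z)
    (h1 : Y.trace = 2)
    (h2a : Y 0 0 + Y 1 1 + Y 2 2 = Y 6 6)
    (h2b : Y 3 3 + Y 4 4 + Y 5 5 = Y 7 7)
    (h3 : Y 3 6 = Y 0 7 ∧ Y 4 6 = Y 1 7 ∧ Y 5 6 = Y 2 7)
    (h4 : Y 0 3 + Y 1 4 + Y 2 5 = Y 6 7)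
    (h5 : Y 6 6 ∈ Set.Icc (0 : ℝ) 1)
    (h6 : 0 ≤ Y 6 7) :
    ∃ t ∈ Set.Icc (0 : ℝ) 1, ∃ y : Fin 3 → ℝ, (∑ i, y i ^ 2 = 1) ∧
      ∃ s : ℝ, (s = 1 ∨ s = -1) ∧
        z = ![Real.sqrt t * y 0, Real.sqrt t * y 1, Real.sqrt t * y 2,
              Real.sqrt (1 - t) * y 0, Real.sqrt (1 - t) * y 1,
              Real.sqrt (1 - t) * y 2,
              s * Real.sqrt t, s * Real.sqrt (1 - t)] := by
  have z0 : z 0 = a * y₁ 0 := by rw [hz]; rfl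
  have z1 : z 1 = a * y₁ 1 := by rw [hz]; rfl
  have z2 : z 2 = a * y₁ 2 := by rw [hz]; rfl
  have z3 : z 3 = b * y₂ 0 := by rw [hz]; rfl
  have z4 : z 4 = b * y₂ 1 := by rw [hz]; rfl
  have z5 : z 5 = b * y₂ 2 := by rw [hz]; rfl
  have z6 : z 6 = c := by rw [hz]; rfl
  have z7 : z 7 = d := by rw [hz]; rfl
  simp only [hYz, vecMulVec_apply, Matrix.trace, Matrix.diag_apply, Fin.sum_univ_eight,
    z0, z1, z2, z3, z4, z5, z6, z7] at h1 h2a h2b h3 h4 h6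
  simp only [Fin.sum_univ_three] at hy₁ hy₂
  obtain ⟨h3a, h3b, h3c⟩ := h3
  have hac : a ^ 2 = c ^ 2 := by linear_combination h2a - a ^ 2 * hy₁
  have hbd : b ^ 2 = d ^ 2 := by linear_combination h2b - b ^ 2 * hy₂
  have hsum : a ^ 2 + b ^ 2 = 1 := by
    linear_combination (h1 - a ^ 2 * hy₁ - b ^ 2 * hy₂ + hac + hbd) / 2
  clear hYz h1 h2a h2b h4 h5 z0 z1 z2 z3 z4 z5 z6 z7
  refine ⟨a ^ 2, ⟨sq_nonneg a, by nlinarith [sq_nonneg b]⟩, ?_⟩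
  have hst : Real.sqrt (a ^ 2) = a := Real.sqrt_sq ha
  have hst' : Real.sqrt (1 - a ^ 2) = b := by
    rw [show 1 - a ^ 2 = b ^ 2 by linarith, Real.sqrt_sq hb]
  rcases eq_or_lt_of_le ha with ha0 | hap
  · -- a = 0 : take y = y₂, s = sign of d
    have ha0 : a = 0 := ha0.symm
    have hc0 : c = 0 := pow_eq_zero_iff two_ne_zero |>.1 (by rw [← hac, ha0]; ring)
    have hb1 : b = 1 := by
      rw [← Real.sqrt_sq hb, show b ^ 2 = 1 by rw [ha0] at hsum; linarith, Real.sqrt_one]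
    have hd : (d - 1) * (d + 1) = 0 := by
      have : d ^ 2 = 1 := by rw [← hbd, hb1]; ring
      linear_combination this
    refine ⟨y₂, by rw [Fin.sum_univ_three]; exact hy₂, d, ?_, ?_⟩
    · rcases mul_eq_zero.1 hd with h | h
      · exact Or.inl (by linarith)
      · exact Or.inr (by linarith)
    · rw [hz]; funext i
      fin_cases i <;> simp [hst, hst', ha0, hb1, hc0] <;> ring
  · rcases eq_or_lt_of_le hb with hb0 | hbp
    · -- b = 0 : take y = y₁, s = sign of c
      have hb0 : b = 0 := hb0.symm
      have hd0 : d = 0 := pow_eq_zero_iff two_ne_zero |>.1 (by rw [← hbd, hb0]; ring)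
      have ha1 : a = 1 := by
        rw [← Real.sqrt_sq ha, show a ^ 2 = 1 by rw [hb0] at hsum; linarith, Real.sqrt_one]
      have hc : (c - 1) * (c + 1) = 0 := by
        have : c ^ 2 = 1 := by rw [← hac, ha1]; ring
        linear_combination this
      refine ⟨y₁, by rw [Fin.sum_univ_three]; exact hy₁, c, ?_, ?_⟩
      · rcases mul_eq_zero.1 hc with h | h
        · exact Or.inl (by linarith)
        · exact Or.inr (by linarith)
      · rw [hz]; funext i
        fin_cases i <;> simp [hst, hst', ha1, hb0, hd0] <;> ring
    · -- a > 0, b > 0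
      have hcne : c ≠ 0 := fun h => by rw [h] at hac; nlinarith
      have hdne : d ≠ 0 := fun h => by rw [h] at hbd; nlinarith
      have hcd : 0 < c * d := lt_of_le_of_ne h6 (fun h => hcne (by
        rcases mul_eq_zero.1 h.symm with h' | h'
        · exact h'
        · exact absurd h' hdne))
      have hy : ∀ i, y₂ i = y₁ i := by
        intro i
        have key : b * y₂ i * c = a * y₁ i * d := by fin_cases i <;> assumption
        rcases lt_or_gt_of_ne hcne with hc | hc
        · have hdneg : d < 0 := by nlinarith
          have hca : c = -a := by nlinarith
          have hdb : d = -b := by nlinarith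
          rw [hca, hdb] at key
          have := mul_pos hap hbp
          nlinarith [key]
        · have hdpos : 0 < d := by nlinarith
          have hca : c = a := by nlinarith
          have hdb : d = b := by nlinarith
          rw [hca, hdb] at key
          have := mul_pos hap hbp
          nlinarith [key]
      rcases lt_or_gt_of_ne hcne with hc | hc
      · have hdneg : d < 0 := by nlinarith
        have hca : c = -a := by nlinarith
        have hdb : d = -b := by nlinarith
        refine ⟨y₁, by rw [Fin.sum_univ_three]; exact hy₁, -1, Or.inr rfl, ?_⟩
        rw [hz]; funext i
        fin_cases i <;> simp [hst, hst', hy 0, hy 1, hy 2, hca, hdb] <;> ring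
      · have hdpos : 0 < d := by nlinarith
        have hca : c = a := by nlinarith
        have hdb : d = b := by nlinarith
        refine ⟨y₁, by rw [Fin.sum_univ_three]; exact hy₁, 1, Or.inl rfl, ?_⟩
        rw [hz]; funext i
        fin_cases i <;> simp [hst, hst', hy 0, hy 1, hy 2, hca, hdb] <;> ring
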